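/- A concept class H has an infinite VC-eluder sequence if and only if H has infinite VC dimension. -/

import Mathlib

/-- `nIdx k = k(k-1)/2`, so that `nIdx (k+1) - nIdx k = k`. -/
def nIdx (k : ℕ) : ℕ := k * (k - 1) / 2

open Finset

namespace VCEluder

variable {X : Type*}

/-- `C` shatters some `d`-tuple of points. -/
def Sh (C : Set (X → Bool)) (d : ℕ) : Prop :=
  ∃ pts : Fin d → X, ∀ b : Fin d → Bool, ∃ h ∈ C, ∀ i, h (pts i) = b i

lemma Sh.mono {C : Set (X → Bool)} {d e : ℕ} (h : Sh C d) (hde : e ≤ d) : Sh C e := by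
  obtain ⟨pts, hp⟩ := h
  refine ⟨fun i => pts (Fin.castLE hde i), fun b => ?_⟩
  obtain ⟨g, hg, hgb⟩ := hp (fun j => if hj : (j : ℕ) < e then b ⟨j, hj⟩ else false)
  refine ⟨g, hg, fun i => ?_⟩
  have := hgb (Fin.castLE hde i)
  simpa [Fin.castLE, i.isLt] using this

lemma Sh.subset {C D : Set (X → Bool)} {d : ℕ} (hCD : C ⊆ D) (h : Sh C d) : Sh D d := by
  obtain ⟨pts, hp⟩ := h
  exact ⟨pts, fun b => by obtain ⟨g, hg, hgb⟩ := hp b; exact ⟨g, hCD hg, hgb⟩⟩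

lemma sum_choose_lt (a b : ℕ) :
    ∑ i ∈ range a, (a + b).choose i + ∑ i ∈ range b, (a + b).choose i < 2 ^ (a + b) := by
  set n := a + b with hn
  have himg : (range b).image (fun i => n - i) = Ico (a + 1) (n + 1) := by
    ext j
    simp only [mem_image, mem_range, mem_Ico]
    constructor
    · rintro ⟨i, hi, rfl⟩; omega
    · intro hj; exact ⟨n - j, by omega, by omega⟩
  have h2 : ∑ i ∈ range b, n.choose i = ∑ j ∈ Ico (a + 1) (n + 1), n.choose j := by
    rw [← himg, Finset.sum_image (by intro i hi j hj hij; simp only [mem_coe, mem_range] at hi hj; beta_reduce at hij; omega)]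
    refine Finset.sum_congr rfl fun i hi => ?_
    rw [mem_range] at hi
    exact (Nat.choose_symm (by omega)).symm
  have h3 : ∑ i ∈ range a, n.choose i + ∑ i ∈ Ico a (n + 1), n.choose i = 2 ^ n := by
    rw [Finset.sum_range_add_sum_Ico _ (by omega), Nat.sum_range_choose]
  have h4 : ∑ i ∈ Ico a (n + 1), n.choose i
      = n.choose a + ∑ j ∈ Ico (a + 1) (n + 1), n.choose j := by
    rw [Finset.sum_eq_sum_Ico_succ_bot (by omega)]
  have h5 : 0 < n.choose a := Nat.choose_pos (by omega)
  omega

open Classical in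
/-- If the projection family of `D` on the points `pts` shatters `s` (as a finset family),
then `D` shatters an `s.card`-tuple. -/
lemma sh_of_proj {n : ℕ} (D : Set (X → Bool)) (pts : Fin n → X) (s : Finset (Fin n))
    (hs : (univ.powerset.filter
      (fun t : Finset (Fin n) => ∃ h ∈ D, ∀ i, (i ∈ t ↔ h (pts i) = true))).Shatters s) :
    Sh D s.card := by
  classical
  set e : Fin s.card ≃o {z // z ∈ s} := s.orderIsoOfFin rfl with he
  refine ⟨fun i => pts (e i : Fin n), fun bb => ?_⟩
  set t : Finset (Fin n) := (univ.filter fun i => bb i = true).image (fun i => (e i : Fin n))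
    with ht
  have hts : t ⊆ s := by
    intro z hz
    simp only [ht, mem_image] at hz
    obtain ⟨i, _, rfl⟩ := hz
    exact (e i).2
  obtain ⟨u, hu, hsu⟩ := hs hts
  simp only [mem_filter, mem_powerset] at hu
  obtain ⟨-, h, hD, hiff⟩ := hu
  refine ⟨h, hD, fun i => ?_⟩
  have hmem : ((e i : Fin n) ∈ t) ↔ bb i = true := by
    simp only [ht, mem_image, mem_filter, mem_univ, true_and]
    constructor
    · rintro ⟨j, hj, hji⟩
      have : j = i := e.injective (Subtype.ext hji)
      rwa [this] at hj
    · intro hb; exact ⟨i, hb, rfl⟩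
  have hes : (e i : Fin n) ∈ s := (e i).2
  have hiu : ((e i : Fin n) ∈ u) ↔ bb i = true := by
    rw [← hmem, ← hsu, mem_inter]
    tauto
  have hfin : (h (pts (e i : Fin n)) = true) ↔ (bb i = true) := (hiff _).symm.trans hiu
  show h (pts (e i : Fin n)) = bb i
  exact Bool.eq_iff_iff.mpr hfin

open Classical in
lemma split (C : Set (X → Bool)) (x : X) (hC : ∀ d, Sh C d) :
    (∀ d, Sh {h | h ∈ C ∧ h x = false} d) ∨ (∀ d, Sh {h | h ∈ C ∧ h x = true} d) := by
  classical
  by_contra hcon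
  push_neg at hcon
  obtain ⟨⟨a, ha⟩, ⟨b, hb⟩⟩ := hcon
  set n := a + b with hn
  obtain ⟨pts, hpts⟩ := hC n
  -- projection families
  set 𝒜 : Finset (Finset (Fin n)) := univ.powerset.filter
    (fun t : Finset (Fin n) => ∃ h ∈ {h | h ∈ C ∧ h x = false}, ∀ i, (i ∈ t ↔ h (pts i) = true))
    with h𝒜
  set ℬ : Finset (Finset (Fin n)) := univ.powerset.filter
    (fun t : Finset (Fin n) => ∃ h ∈ {h | h ∈ C ∧ h x = true}, ∀ i, (i ∈ t ↔ h (pts i) = true))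
    with hℬ
  -- every subset of `univ` is a projection of some `h ∈ C`
  have hsub : (univ : Finset (Fin n)).powerset ⊆ 𝒜 ∪ ℬ := by
    intro s hsP
    obtain ⟨h, hhC, hhb⟩ := hpts (fun i => decide (i ∈ s))
    have hproj : ∀ i, (i ∈ s ↔ h (pts i) = true) := by
      intro i
      rw [hhb i]
      simp
    rcases Bool.eq_false_or_eq_true (h x) with hx | hx
    · exact mem_union_right _ (by simp only [hℬ, mem_filter]; exact ⟨hsP, h, ⟨hhC, hx⟩, hproj⟩)
    · exact mem_union_left _ (by simp only [h𝒜, mem_filter]; exact ⟨hsP, h, ⟨hhC, hx⟩, hproj⟩)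
  -- each projection family has few sets, by Sauer-Shelah (Pajor)
  have hboundA : 𝒜.card ≤ ∑ i ∈ range a, n.choose i := by
    refine (Finset.card_le_card_shatterer 𝒜).trans ?_
    have hsh : 𝒜.shatterer ⊆ (range a).biUnion (fun i => powersetCard i univ) := by
      intro s hs
      rw [mem_shatterer] at hs
      have hcard : s.card < a := by
        by_contra hlt
        exact ha ((sh_of_proj _ pts s hs).mono (by omega))
      simp only [mem_biUnion, mem_range]
      exact ⟨s.card, hcard, by simp [mem_powersetCard]⟩
    refine (Finset.card_le_card hsh).trans ?_
    refine (Finset.card_biUnion_le).trans ?_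
    refine Finset.sum_le_sum fun i _ => ?_
    rw [card_powersetCard, card_univ, Fintype.card_fin]
  have hboundB : ℬ.card ≤ ∑ i ∈ range b, n.choose i := by
    refine (Finset.card_le_card_shatterer ℬ).trans ?_
    have hsh : ℬ.shatterer ⊆ (range b).biUnion (fun i => powersetCard i univ) := by
      intro s hs
      rw [mem_shatterer] at hs
      have hcard : s.card < b := by
        by_contra hlt
        exact hb ((sh_of_proj _ pts s hs).mono (by omega))
      simp only [mem_biUnion, mem_range]
      exact ⟨s.card, hcard, by simp [mem_powersetCard]⟩
    refine (Finset.card_le_card hsh).trans ?_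
    refine (Finset.card_biUnion_le).trans ?_
    refine Finset.sum_le_sum fun i _ => ?_
    rw [card_powersetCard, card_univ, Fintype.card_fin]
  have hpow : (univ : Finset (Fin n)).powerset.card = 2 ^ n := by
    rw [card_powerset, card_univ, Fintype.card_fin]
  have hle : 2 ^ n ≤ 𝒜.card + ℬ.card := by
    calc 2 ^ n = (univ : Finset (Fin n)).powerset.card := hpow.symm
      _ ≤ (𝒜 ∪ ℬ).card := Finset.card_le_card hsub
      _ ≤ 𝒜.card + ℬ.card := Finset.card_union_le _ _
  have hlt := sum_choose_lt a b
  rw [← hn] at hlt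
  omega

lemma exists_labels : ∀ (m : ℕ) (C : Set (X → Bool)), (∀ d, Sh C d) → ∀ (pts : Fin m → X),
    ∃ bl : Fin m → Bool, ∀ d, Sh {h | h ∈ C ∧ ∀ i, h (pts i) = bl i} d := by
  intro m
  induction m with
  | zero =>
    intro C hC pts
    exact ⟨fun i => i.elim0, fun d => (hC d).subset (fun h hh => ⟨hh, fun i => i.elim0⟩)⟩
  | succ m ih =>
    intro C hC pts
    obtain ⟨v, hv⟩ : ∃ v : Bool, ∀ d, Sh {h | h ∈ C ∧ h (pts (Fin.last m)) = v} d := by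
      rcases split C (pts (Fin.last m)) hC with h | h
      exacts [⟨false, h⟩, ⟨true, h⟩]
    obtain ⟨bl', hbl'⟩ := ih _ hv (fun i => pts i.castSucc)
    refine ⟨fun i => if hi : (i : ℕ) < m then bl' ⟨i, hi⟩ else v, fun d => (hbl' d).subset ?_⟩
    rintro h ⟨⟨hhC, hlast⟩, hrest⟩
    refine ⟨hhC, fun i => ?_⟩
    by_cases hi : (i : ℕ) < m
    · have := hrest ⟨i, hi⟩
      have hcs : (⟨(i : ℕ), hi⟩ : Fin m).castSucc = i := by
        ext; simp
      rw [hcs] at this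
      rw [this]
      simp [hi]
    · have hil : i = Fin.last m := by
        ext; simp only [Fin.val_last]; omega
      rw [hil, hlast]
      simp [hi]

lemma nIdx_succ (k : ℕ) : nIdx (k + 1) = nIdx k + k := by
  match k with
  | 0 => rfl
  | (m + 1) =>
    show (m + 2) * (m + 1) / 2 = (m + 1) * m / 2 + (m + 1)
    have h1 : (m + 2) * (m + 1) = (m + 1) * m + 2 * (m + 1) := by ring
    rw [h1, Nat.add_mul_div_left _ _ (by norm_num : (0:ℕ) < 2)]

lemma nIdx_mono : Monotone nIdx := by
  apply monotone_nat_of_le_succ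
  intro k
  rw [nIdx_succ]
  omega

lemma self_le_nIdx_succ (k : ℕ) : k ≤ nIdx (k + 1) := by
  induction k with
  | zero => simp
  | succ m ih => rw [nIdx_succ]; have := nIdx_mono (Nat.le_succ m); omega

/-- extend a sequence by a block of `k` labeled points starting at position `m`. -/
def extendP (p : ℕ → X × Bool) (m k : ℕ) (pts : Fin k → X) (bl : Fin k → Bool) :
    ℕ → X × Bool :=
  fun n => if h : m ≤ n ∧ n - m < k then (pts ⟨n - m, h.2⟩, bl ⟨n - m, h.2⟩) else p n

lemma extendP_lt {p : ℕ → X × Bool} {m k : ℕ} {pts : Fin k → X} {bl : Fin k → Bool} {n : ℕ}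
    (hn : n < m) : extendP p m k pts bl n = p n :=
  dif_neg (by omega)

lemma extendP_block {p : ℕ → X × Bool} {m k : ℕ} {pts : Fin k → X} {bl : Fin k → Bool}
    (i : Fin k) : extendP p m k pts bl (m + i) = (pts i, bl i) := by
  have h : m ≤ m + (i : ℕ) ∧ m + (i : ℕ) - m < k := ⟨by omega, by simp [i.isLt]⟩
  rw [extendP, dif_pos h]
  congr 1 <;> · congr 1; ext; simp

/-- The invariant carried along the construction: the version space after the first
`nIdx (k+1)` examples still has infinite VC dimension, and the eluder property holds for
all blocks `j ≤ k`. -/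
def Inv (H : Set (X → Bool)) (k : ℕ) (p : ℕ → X × Bool) : Prop :=
  (∀ d, Sh {h | h ∈ H ∧ ∀ i < nIdx (k + 1), h (p i).1 = (p i).2} d) ∧
  (∀ j, 1 ≤ j → j ≤ k → ∀ b : Fin j → Bool,
    ∃ h ∈ H, (∀ i < nIdx j, h (p i).1 = (p i).2) ∧ ∀ i : Fin j, h (p (nIdx j + i)).1 = b i)

lemma step_inv (H : Set (X → Bool)) (k : ℕ) (p : ℕ → X × Bool) (hp : Inv H k p)
    (pts : Fin (k + 1) → X)
    (hpts : ∀ b : Fin (k + 1) → Bool,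
      ∃ h ∈ {h | h ∈ H ∧ ∀ i < nIdx (k + 1), h (p i).1 = (p i).2}, ∀ i, h (pts i) = b i)
    (bl : Fin (k + 1) → Bool)
    (hbl : ∀ d, Sh {h | h ∈ {h | h ∈ H ∧ ∀ i < nIdx (k + 1), h (p i).1 = (p i).2} ∧
      ∀ i, h (pts i) = bl i} d) :
    Inv H (k + 1) (extendP p (nIdx (k + 1)) (k + 1) pts bl) := by
  have hsucc : nIdx (k + 1 + 1) = nIdx (k + 1) + (k + 1) := nIdx_succ (k + 1)
  constructor
  · intro d
    refine (hbl d).subset ?_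
    rintro h ⟨⟨hhH, hpre⟩, hblk⟩
    refine ⟨hhH, fun i hi => ?_⟩
    by_cases him : i < nIdx (k + 1)
    · rw [extendP_lt him]; exact hpre i him
    · have hr : i - nIdx (k + 1) < k + 1 := by omega
      have hb2 := extendP_block (p := p) (m := nIdx (k + 1)) (pts := pts) (bl := bl)
        ⟨i - nIdx (k + 1), hr⟩
      have hieq : nIdx (k + 1) + ((⟨i - nIdx (k + 1), hr⟩ : Fin (k + 1)) : ℕ) = i := by
        simp only [Fin.val_mk]; omega
      rw [hieq] at hb2
      rw [hb2]
      exact hblk _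
  · intro j hj1 hjk b
    rcases Nat.lt_or_ge j (k + 1) with hjlt | hjge
    · obtain ⟨h, hhH, hpre, hblk⟩ := hp.2 j hj1 (by omega) b
      have hnj : nIdx (j + 1) ≤ nIdx (k + 1) := nIdx_mono (by omega)
      have hnjj : nIdx j + j ≤ nIdx (k + 1) := by rw [← nIdx_succ]; exact hnj
      have hnj2 : nIdx j ≤ nIdx (k + 1) := nIdx_mono (by omega)
      refine ⟨h, hhH, fun i hi => ?_, fun i => ?_⟩
      · rw [extendP_lt (by omega)]; exact hpre i hi
      · rw [extendP_lt (by have := i.isLt; omega)]; exact hblk i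
    · have hjeq : j = k + 1 := by omega
      subst hjeq
      obtain ⟨h, ⟨hhH, hpre⟩, hblk⟩ := hpts b
      refine ⟨h, hhH, fun i hi => ?_, fun i => ?_⟩
      · rw [extendP_lt hi]; exact hpre i hi
      · rw [extendP_block]; exact hblk i

lemma base_inv (H : Set (X → Bool)) (hH : ∀ d, Sh H d) (x0 : X) :
    Inv H 0 (fun _ => (x0, false)) := by
  constructor
  · intro d
    refine (hH d).subset fun h hh => ⟨hh, fun i hi => ?_⟩
    simp [nIdx] at hi
  · intro j hj1 hj0
    omega

noncomputable def stepFun (H : Set (X → Bool)) (k : ℕ)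
    (pp : {p : ℕ → X × Bool // Inv H k p}) : {q : ℕ → X × Bool // Inv H (k + 1) q} :=
  ⟨extendP pp.1 (nIdx (k + 1)) (k + 1) (Classical.choose (pp.2.1 (k + 1)))
      (Classical.choose (exists_labels (k + 1) _ pp.2.1 (Classical.choose (pp.2.1 (k + 1))))),
    step_inv H k pp.1 pp.2 _ (Classical.choose_spec (pp.2.1 (k + 1))) _
      (Classical.choose_spec (exists_labels (k + 1) _ pp.2.1
        (Classical.choose (pp.2.1 (k + 1)))))⟩

noncomputable def G (H : Set (X → Bool)) (x0 : X) (hH : ∀ d, Sh H d) :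
    ∀ k, {p : ℕ → X × Bool // Inv H k p}
  | 0 => ⟨fun _ => (x0, false), base_inv H hH x0⟩
  | (k + 1) => stepFun H k (G H x0 hH k)

lemma G_agree_succ (H : Set (X → Bool)) (x0 : X) (hH : ∀ d, Sh H d) (k n : ℕ)
    (hn : n < nIdx (k + 1)) : (G H x0 hH (k + 1)).1 n = (G H x0 hH k).1 n := by
  show extendP _ _ _ _ _ n = _
  exact extendP_lt hn

lemma G_agree (H : Set (X → Bool)) (x0 : X) (hH : ∀ d, Sh H d) (k : ℕ) :
    ∀ K, k ≤ K → ∀ n, n < nIdx (k + 1) → (G H x0 hH K).1 n = (G H x0 hH k).1 n := by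
  intro K hkK
  induction K, hkK using Nat.le_induction with
  | base => intro n _; rfl
  | succ K hK ih =>
    intro n hn
    rw [G_agree_succ H x0 hH K n (lt_of_lt_of_le hn (nIdx_mono (by omega)))]
    exact ih n hn

end VCEluder

/-- A concept class has an infinite VC-eluder sequence iff it has infinite
VC dimension.  An infinite VC-eluder sequence is a realizable sequence `(x_i, y_i)` such
that for every `k ≥ 1` the `k` points `x_{n_k+1}, …, x_{n_k+k}` are shattered by the
version space induced by the first `n_k` labeled pairs. -/
theorem infinite_vc_eluder_iff_infinite_vc {X : Type*} (H : Set (X → Bool)) :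
    (∃ (x : ℕ → X) (y : ℕ → Bool),
      (∀ n : ℕ, ∃ h ∈ H, ∀ i < n, h (x i) = y i) ∧
      (∀ k : ℕ, 1 ≤ k → ∀ b : Fin k → Bool,
        ∃ h ∈ H, (∀ i < nIdx k, h (x i) = y i) ∧
          ∀ i : Fin k, h (x (nIdx k + i)) = b i)) ↔
    (∀ d : ℕ, ∃ pts : Fin d → X, ∀ b : Fin d → Bool, ∃ h ∈ H, ∀ i, h (pts i) = b i) := by
  constructor
  · rintro ⟨x, y, _, helu⟩ d
    refine ⟨fun i => x (nIdx (d + 1) + (i : ℕ)), fun b => ?_⟩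
    obtain ⟨h, hhH, -, hb⟩ := helu (d + 1) (by omega)
      (fun j => if hj : (j : ℕ) < d then b ⟨j, hj⟩ else false)
    refine ⟨h, hhH, fun i => ?_⟩
    have := hb ⟨(i : ℕ), by omega⟩
    simpa [i.isLt] using this
  · intro hH
    have hH' : ∀ d, VCEluder.Sh H d := hH
    obtain ⟨pts1, -⟩ := hH 1
    set x0 := pts1 0 with hx0
    set G' := VCEluder.G H x0 hH' with hG'
    set x : ℕ → X := fun n => ((G' (n + 1)).1 n).1 with hx
    set y : ℕ → Bool := fun n => ((G' (n + 1)).1 n).2 with hy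
    have key : ∀ K n, n < nIdx (K + 1) → (G' K).1 n = (x n, y n) := by
      intro K n hn
      have hxy : (x n, y n) = (G' (n + 1)).1 n := by rw [hx, hy]
      rcases le_total K (n + 1) with hK | hK
      · rw [hxy, VCEluder.G_agree H x0 hH' K (n + 1) hK n hn]
      · have hn2 : n < nIdx (n + 1 + 1) := by
          have h1 := VCEluder.self_le_nIdx_succ n
          have h2 := VCEluder.nIdx_succ (n + 1)
          omega
        rw [hxy, VCEluder.G_agree H x0 hH' (n + 1) K hK n hn2]
    refine ⟨x, y, ?_, ?_⟩
    · intro n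
      obtain ⟨pts0, hp0⟩ := (G' n).2.1 0
      obtain ⟨h, hV, -⟩ := hp0 (fun i => i.elim0)
      refine ⟨h, hV.1, fun i hi => ?_⟩
      have hi' : i < nIdx (n + 1) := by
        have := VCEluder.self_le_nIdx_succ n; omega
      have hk := key n i hi'
      have := hV.2 i hi'
      rw [hk] at this
      exact this
    · intro k hk b
      obtain ⟨h, hhH, hpre, hblk⟩ := (G' k).2.2 k hk le_rfl b
      have hsucc := VCEluder.nIdx_succ k
      refine ⟨h, hhH, fun i hi => ?_, fun i => ?_⟩
      · have hi' : i < nIdx (k + 1) := by omega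
        have hk2 := key k i hi'
        have := hpre i hi
        rw [hk2] at this
        exact this
      · have hi' : nIdx k + (i : ℕ) < nIdx (k + 1) := by have := i.isLt; omega
        have hk2 := key k _ hi'
        have := hblk i
        rw [hk2] at this
        exact this
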